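/- The stabilizer of P in SU(3) under the action g · P = g P gᵀ equals the fixed point set of σᴳ in SU(3), and both equal the circle group U(1) = {diag(a, a⁻¹, 1) : a ∈ ℂ, |a| = 1}; i.e. {g ∈ SU(3) : g P gᵀ = P} = {g ∈ SU(3) : P (gᵀ)⁻¹ P = g} = {diag(a, a⁻¹, 1) : a ∈ ℂ, |a| = 1}. -/

import Mathlib

open Complex Matrix

noncomputable section

abbrev M3 := Matrix (Fin 3) (Fin 3) ℂ

/-- ε = exp(iπ/3). -/
def eps : ℂ := Complex.exp (Real.pi * Complex.I / 3)

/-- The matrix P with rows (0, ε², 0), (ε⁴, 0, 0), (0, 0, 1). -/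
def Pm : M3 := !![0, eps ^ 2, 0; eps ^ 4, 0, 0; 0, 0, 1]

/-- SU(3). -/
def SU3 : Set M3 := {g : M3 | g * gᴴ = 1 ∧ g.det = 1}

lemma eps_ne_zero : eps ≠ 0 := Complex.exp_ne_zero _

lemma eps_pow_three : eps ^ 3 = -1 := by
  rw [eps, ← Complex.exp_nat_mul]
  rw [show (3:ℕ) * (↑Real.pi * I / 3) = ↑Real.pi * I by push_cast; ring, Complex.exp_pi_mul_I]

lemma eps_pow_six : eps ^ 6 = 1 := by
  have h := eps_pow_three
  calc eps ^ 6 = (eps ^ 3) ^ 2 := by ring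
    _ = 1 := by rw [h]; norm_num

lemma conj_eps : (starRingEnd ℂ) eps = eps⁻¹ := by
  rw [eps, ← Complex.exp_conj, ← Complex.exp_neg]
  congr 1
  rw [show (↑Real.pi * I / 3 : ℂ) = ↑Real.pi * I * (3:ℂ)⁻¹ by ring, _root_.map_mul,
    _root_.map_mul, map_inv₀, map_ofNat, Complex.conj_ofReal, Complex.conj_I]
  ring

lemma eps_mul24 : eps ^ 2 * eps ^ 4 = 1 := by
  have := eps_pow_six; linear_combination this

lemma eps_inv : eps⁻¹ = eps ^ 5 := by
  have h0 := eps_ne_zero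
  field_simp
  linear_combination -eps_pow_six

lemma conj_eps_sq : (starRingEnd ℂ) (eps ^ 2) = eps ^ 4 := by
  rw [map_pow, conj_eps, eps_inv]
  linear_combination eps ^ 4 * eps_pow_six

lemma conj_eps_four : (starRingEnd ℂ) (eps ^ 4) = eps ^ 2 := by
  have := congrArg (starRingEnd ℂ) conj_eps_sq
  simpa using this.symm

lemma eps_re : eps.re = 1 / 2 := by
  rw [eps, show (↑Real.pi * I / 3) = (↑(Real.pi / 3) * I) by push_cast; ring,
    Complex.exp_ofReal_mul_I_re, Real.cos_pi_div_three]

lemma eps_sq_ne_one : eps ^ 2 ≠ 1 := by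
  intro h
  have h2 : (eps - 1) * (eps + 1) = 0 := by linear_combination h
  rcases mul_eq_zero.mp h2 with h3 | h3
  · have : eps = 1 := by linear_combination h3
    have := congrArg Complex.re this
    rw [eps_re] at this; norm_num at this
  · have : eps = -1 := by linear_combination h3
    have := congrArg Complex.re this
    rw [eps_re] at this; norm_num at this

lemma eps_four_ne_one : eps ^ 4 ≠ 1 := by
  intro h
  apply eps_sq_ne_one
  calc eps ^ 2 = eps ^ 2 * eps ^ 4 := by rw [h]; ring
    _ = 1 := eps_mul24

lemma Pm_mul_Pm : Pm * Pm = 1 := by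
  ext i j
  fin_cases i <;> fin_cases j <;>
    simp [Pm, Matrix.mul_apply, Fin.sum_univ_three, Matrix.one_apply, eps_mul24,
      mul_comm (eps ^ 4) (eps ^ 2), Matrix.vecHead, Matrix.vecTail]

/-- The key classification: forward direction. -/
lemma key (g : M3) (hU : g * gᴴ = 1) (hd : g.det = 1)
    (hP : g * Pm = Pm * (gᴴ)ᵀ) :
    ∃ a : ℂ, ‖a‖ = 1 ∧ g = Matrix.diagonal ![a, a⁻¹, 1] := by
  have hU' : gᴴ * g = 1 := mul_eq_one_comm.mp hU
  have E : ∀ i j, (g * Pm) i j = (Pm * (gᴴ)ᵀ) i j := fun i j =>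
    congr_fun (congr_fun hP i) j
  have e00 := E 0 0; have e01 := E 0 1; have e02 := E 0 2
  have e10 := E 1 0; have e11 := E 1 1; have e12 := E 1 2
  have e20 := E 2 0; have e21 := E 2 1; have e22 := E 2 2
  simp only [Pm, Matrix.mul_apply, Fin.sum_univ_three, Matrix.transpose_apply,
    Matrix.conjTranspose_apply, Matrix.cons_val', Matrix.cons_val_zero, Matrix.cons_val_one,
    Matrix.head_cons, Matrix.empty_val', Matrix.cons_val_fin_one, Matrix.head_fin_const,
    Matrix.cons_val_two, Matrix.tail_cons, Matrix.of_apply, mul_zero, zero_mul, add_zero,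
    zero_add, mul_one, one_mul, RCLike.star_def] at e00 e01 e02 e10 e11 e12 e20 e21 e22
  -- conjugates of equations
  have ce11 := congrArg (starRingEnd ℂ) e11
  have ce12 := congrArg (starRingEnd ℂ) e12
  simp only [_root_.map_mul, conj_eps_sq, conj_eps_four, Complex.conj_conj] at ce11 ce12
  -- g 0 1 = 0 and g 1 0 = 0
  have h01 : g 0 1 = 0 := by
    have hz : g 0 1 * (1 - eps ^ 2) = 0 := by
      linear_combination eps ^ 2 * e00 + ce11 - g 0 1 * eps_pow_six
    rcases mul_eq_zero.mp hz with h | h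
    · exact h
    · exact absurd (by linear_combination -h : eps ^ 2 = 1) eps_sq_ne_one
  have h10 : g 1 0 = 0 := by
    have h2 : eps ^ 2 ≠ 0 := pow_ne_zero _ eps_ne_zero
    have := e11
    rw [h01] at this
    simp only [map_zero, mul_zero] at this
    exact (mul_eq_zero.mp this).resolve_right h2
  -- g 0 2 = 0 and g 1 2 = 0
  have h02 : g 0 2 = 0 := by
    have hz : g 0 2 * (1 - eps ^ 4) = 0 := by
      linear_combination e02 + eps ^ 2 * ce12
    rcases mul_eq_zero.mp hz with h | h
    · exact h
    · exact absurd (by linear_combination -h : eps ^ 4 = 1) eps_four_ne_one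
  have h12 : g 1 2 = 0 := by
    rw [h02] at e12
    simpa using e12
  -- column 2 unitarity gives |g 2 2| = 1
  have col2 := congr_fun (congr_fun hU' 2) 2
  simp only [Matrix.mul_apply, Fin.sum_univ_three, Matrix.conjTranspose_apply,
    Matrix.one_apply_eq, RCLike.star_def, h02, h12, map_zero, zero_mul, mul_zero,
    add_zero, zero_add] at col2
  -- row 2 unitarity
  have row2 := congr_fun (congr_fun hU 2) 2
  simp only [Matrix.mul_apply, Fin.sum_univ_three, Matrix.conjTranspose_apply,
    Matrix.one_apply_eq, RCLike.star_def] at row2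
  have hsum : g 2 0 * (starRingEnd ℂ) (g 2 0) + g 2 1 * (starRingEnd ℂ) (g 2 1) = 0 := by
    have : g 2 2 * (starRingEnd ℂ) (g 2 2) = 1 := by linear_combination col2
    linear_combination row2 - this
  rw [Complex.mul_conj, Complex.mul_conj] at hsum
  have hsum' : Complex.normSq (g 2 0) + Complex.normSq (g 2 1) = 0 := by
    exact_mod_cast hsum
  have h20 : g 2 0 = 0 := by
    apply Complex.normSq_eq_zero.mp
    nlinarith [Complex.normSq_nonneg (g 2 0), Complex.normSq_nonneg (g 2 1)]
  have h21 : g 2 1 = 0 := by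
    apply Complex.normSq_eq_zero.mp
    nlinarith [Complex.normSq_nonneg (g 2 0), Complex.normSq_nonneg (g 2 1)]
  -- g 2 2 real with square 1
  have h22sq : g 2 2 * g 2 2 = 1 := by
    have : (starRingEnd ℂ) (g 2 2) * g 2 2 = 1 := by linear_combination col2
    rw [← e22] at this
    linear_combination this
  -- g 1 1 = conj (g 0 0)
  have h11 : g 1 1 = (starRingEnd ℂ) (g 0 0) := by
    have h4 : eps ^ 4 ≠ 0 := pow_ne_zero _ eps_ne_zero
    exact mul_right_cancel₀ h4 (by linear_combination e10)
  -- row 0 unitarity: g00 * conj g00 = 1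
  have row0 := congr_fun (congr_fun hU 0) 0
  simp only [Matrix.mul_apply, Fin.sum_univ_three, Matrix.conjTranspose_apply,
    Matrix.one_apply_eq, RCLike.star_def, h01, h02, map_zero, mul_zero, add_zero] at row0
  -- determinant
  have hdet := hd
  rw [Matrix.det_fin_three] at hdet
  rw [h01, h02, h10, h12, h20, h21] at hdet
  simp only [mul_zero, zero_mul, sub_zero, zero_sub, mul_neg, neg_zero, add_zero,
    zero_add, neg_neg] at hdet
  -- hdet : g 0 0 * (g 1 1 * g 2 2) = 1
  have h22 : g 2 2 = 1 := by
    have hp : g 0 0 * g 1 1 = 1 := by rw [h11]; exact row0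
    linear_combination hdet - g 2 2 * hp
  refine ⟨g 0 0, ?_, ?_⟩
  · have : Complex.normSq (g 0 0) = 1 := by
      have := row0
      rw [Complex.mul_conj] at this
      exact_mod_cast this
    rw [Complex.norm_def, this, Real.sqrt_one]
  · have hinv : (g 0 0)⁻¹ = g 1 1 := by
      rw [h11]
      exact inv_eq_of_mul_eq_one_right row0
    ext i j
    fin_cases i <;> fin_cases j <;>
      simp [Matrix.diagonal_apply, h01, h02, h10, h12, h20, h21, h22, hinv.symm]

lemma su3_trans_conj {g : M3} (hU : g * gᴴ = 1) : gᵀ * (gᴴ)ᵀ = 1 := by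
  have h2 : gᴴ * g = 1 := mul_eq_one_comm.mp hU
  calc gᵀ * (gᴴ)ᵀ = (gᴴ * g)ᵀ := by rw [Matrix.transpose_mul]
    _ = 1 := by rw [h2, Matrix.transpose_one]

lemma stab_iff_fix {g : M3} (hU : g * gᴴ = 1) :
    g * Pm * gᵀ = Pm ↔ Pm * (gᵀ)⁻¹ * Pm = g := by
  have htg := su3_trans_conj hU
  have hginv : (gᵀ)⁻¹ = (gᴴ)ᵀ := Matrix.inv_eq_right_inv htg
  rw [hginv]
  constructor
  · intro h
    have hgp : g * Pm = Pm * (gᴴ)ᵀ := by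
      calc g * Pm = g * Pm * (gᵀ * (gᴴ)ᵀ) := by rw [htg, mul_one]
        _ = (g * Pm * gᵀ) * (gᴴ)ᵀ := by simp only [Matrix.mul_assoc]
        _ = Pm * (gᴴ)ᵀ := by rw [h]
    calc Pm * (gᴴ)ᵀ * Pm = (g * Pm) * Pm := by rw [hgp]
      _ = g * (Pm * Pm) := by rw [mul_assoc]
      _ = g := by rw [Pm_mul_Pm, mul_one]
  · intro h
    have hct : (gᴴ)ᵀ * gᵀ = 1 := by
      calc (gᴴ)ᵀ * gᵀ = (g * gᴴ)ᵀ := by rw [Matrix.transpose_mul]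
        _ = 1 := by rw [hU, Matrix.transpose_one]
    calc g * Pm * gᵀ = (Pm * (gᴴ)ᵀ * Pm) * Pm * gᵀ := by rw [h]
      _ = Pm * (gᴴ)ᵀ * (Pm * Pm) * gᵀ := by noncomm_ring
      _ = Pm * ((gᴴ)ᵀ * gᵀ) := by rw [Pm_mul_Pm, mul_one, mul_assoc]
      _ = Pm := by rw [hct, mul_one]

lemma diag_mem (a : ℂ) (ha : ‖a‖ = 1) :
    Matrix.diagonal ![a, a⁻¹, 1] ∈ SU3 ∧
      Matrix.diagonal ![a, a⁻¹, 1] * Pm * (Matrix.diagonal ![a, a⁻¹, 1])ᵀ = Pm := by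
  have ha0 : a ≠ 0 := by
    intro h; rw [h] at ha; simp at ha
  have hmc : a * (starRingEnd ℂ) a = 1 := by
    rw [Complex.mul_conj]
    norm_cast
    rw [Complex.normSq_eq_norm_sq, ha]; norm_num
  have hconj : (starRingEnd ℂ) a = a⁻¹ :=
    inv_eq_of_mul_eq_one_right hmc |>.symm
  have hconjinv : (starRingEnd ℂ) a⁻¹ = a := by
    rw [map_inv₀, hconj, inv_inv]
  refine ⟨⟨?_, ?_⟩, ?_⟩
  · ext i j
    fin_cases i <;> fin_cases j <;>
      simp [Matrix.mul_apply, Fin.sum_univ_three, Matrix.conjTranspose_apply,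
        Matrix.diagonal_apply, Matrix.one_apply, RCLike.star_def, hconj, hconjinv,
        hmc, ha0, mul_inv_cancel₀]
  · rw [Matrix.det_diagonal, Fin.prod_univ_three]
    simp [mul_inv_cancel₀ ha0]
  · ext i j
    rw [Matrix.diagonal_transpose]
    fin_cases i <;> fin_cases j <;>
      simp [Pm, Matrix.mul_apply, Fin.sum_univ_three, Matrix.diagonal_apply,
        Matrix.vecHead, Matrix.vecTail] <;>
      field_simp

/-- The stabilizer of P in SU(3) under g·P = g P gᵀ equals the fixed point set of σᴳ in
SU(3), and both equal U(1) = {diag(a, a⁻¹, 1) : |a| = 1}. -/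
theorem statement10 :
    {g : M3 | g ∈ SU3 ∧ g * Pm * gᵀ = Pm}
      = {g : M3 | g ∈ SU3 ∧ Pm * (gᵀ)⁻¹ * Pm = g} ∧
    {g : M3 | g ∈ SU3 ∧ g * Pm * gᵀ = Pm}
      = {g : M3 | ∃ a : ℂ, ‖a‖ = 1 ∧ g = Matrix.diagonal ![a, a⁻¹, 1]} := by
  constructor
  · ext g
    simp only [Set.mem_setOf_eq]
    constructor
    · rintro ⟨hs, h⟩
      exact ⟨hs, (stab_iff_fix hs.1).mp h⟩
    · rintro ⟨hs, h⟩
      exact ⟨hs, (stab_iff_fix hs.1).mpr h⟩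
  · ext g
    simp only [Set.mem_setOf_eq]
    constructor
    · rintro ⟨⟨hU, hd⟩, h⟩
      have htg := su3_trans_conj hU
      have hgp : g * Pm = Pm * (gᴴ)ᵀ := by
        calc g * Pm = g * Pm * (gᵀ * (gᴴ)ᵀ) := by rw [htg, mul_one]
          _ = (g * Pm * gᵀ) * (gᴴ)ᵀ := by simp only [Matrix.mul_assoc]
          _ = Pm * (gᴴ)ᵀ := by rw [h]
      exact key g hU hd hgp
    · rintro ⟨a, ha, rfl⟩
      obtain ⟨hs, h⟩ := diag_mem a ha
      exact ⟨hs, h⟩
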